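/- The kernel T₆(x) = x⁴(x² - 7x/5 + 1/2)/720 for x ∈ [0,1/2) and T₆(x) = (x-1)⁴(x² - 3x/5 + 1/10)/720 for x ∈ [1/2,1] satisfies T₆(x) ≥ 0 for all x ∈ [0,1] and ∫₀¹ T₆(x) dx = 1/604800. -/
import Mathlib

open intervalIntegral MeasureTheory

private lemma poly_cont (c6 c5 c4 c3 c2 c1 c0 : ℝ) :
    Continuous (fun x : ℝ => c6 * x ^ 6 + c5 * x ^ 5 + c4 * x ^ 4 + c3 * x ^ 3
      + c2 * x ^ 2 + c1 * x + c0) := by continuity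

private lemma poly_int (a b c6 c5 c4 c3 c2 c1 c0 : ℝ) :
    (∫ x in a..b, (c6 * x ^ 6 + c5 * x ^ 5 + c4 * x ^ 4 + c3 * x ^ 3
        + c2 * x ^ 2 + c1 * x + c0)) =
      (c6 * b ^ 7 / 7 + c5 * b ^ 6 / 6 + c4 * b ^ 5 / 5 + c3 * b ^ 4 / 4
        + c2 * b ^ 3 / 3 + c1 * b ^ 2 / 2 + c0 * b)
      - (c6 * a ^ 7 / 7 + c5 * a ^ 6 / 6 + c4 * a ^ 5 / 5 + c3 * a ^ 4 / 4
        + c2 * a ^ 3 / 3 + c1 * a ^ 2 / 2 + c0 * a) := by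
  have h : ∀ n : ℕ, ∀ c : ℝ, IntervalIntegrable (fun x : ℝ => c * x ^ n) volume a b :=
    fun n c => (continuous_const.mul (continuous_pow n)).intervalIntegrable _ _
  have hc : IntervalIntegrable (fun _ : ℝ => c0) volume a b :=
    intervalIntegrable_const
  have h1 : ∀ c : ℝ, IntervalIntegrable (fun x : ℝ => c * x) volume a b :=
    fun c => (continuous_const.mul continuous_id).intervalIntegrable _ _
  rw [intervalIntegral.integral_add (((((IntervalIntegrable.add (h 6 c6) (h 5 c5)).add
        (h 4 c4)).add (h 3 c3)).add (h 2 c2)).add (h1 c1)) hc,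
    intervalIntegral.integral_add ((((IntervalIntegrable.add (h 6 c6) (h 5 c5)).add
        (h 4 c4)).add (h 3 c3)).add (h 2 c2)) (h1 c1),
    intervalIntegral.integral_add (((IntervalIntegrable.add (h 6 c6) (h 5 c5)).add
        (h 4 c4)).add (h 3 c3)) (h 2 c2),
    intervalIntegral.integral_add ((IntervalIntegrable.add (h 6 c6) (h 5 c5)).add
        (h 4 c4)) (h 3 c3),
    intervalIntegral.integral_add (IntervalIntegrable.add (h 6 c6) (h 5 c5)) (h 4 c4),
    intervalIntegral.integral_add (h 6 c6) (h 5 c5)]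
  rw [intervalIntegral.integral_const_mul c1 (fun x => x), integral_id]
  simp [intervalIntegral.integral_const_mul, integral_pow]
  ring

theorem T6_nonneg_and_integral :
    (∀ x ∈ Set.Icc (0:ℝ) 1,
      0 ≤ (if x < 1/2 then x ^ 4 * (x ^ 2 - 7 * x / 5 + 1/2) / 720
        else (x - 1) ^ 4 * (x ^ 2 - 3 * x / 5 + 1/10) / 720)) ∧
    (∫ x in (0:ℝ)..1,
      (if x < 1/2 then x ^ 4 * (x ^ 2 - 7 * x / 5 + 1/2) / 720
        else (x - 1) ^ 4 * (x ^ 2 - 3 * x / 5 + 1/10) / 720)) = 1 / 604800 := by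
  set f : ℝ → ℝ := fun x =>
    if x < 1/2 then x ^ 4 * (x ^ 2 - 7 * x / 5 + 1/2) / 720
    else (x - 1) ^ 4 * (x ^ 2 - 3 * x / 5 + 1/10) / 720 with hf
  constructor
  · intro x _
    by_cases h : x < 1/2 <;> simp only [h, if_pos, if_neg, not_false_iff]
    · have h1 : (0:ℝ) ≤ x ^ 4 := by positivity
      nlinarith [sq_nonneg (x - 7/10)]
    · have h1 : (0:ℝ) ≤ (x - 1) ^ 4 := by positivity
      nlinarith [sq_nonneg (x - 3/10)]
  · -- the two polynomial pieces
    set g1 : ℝ → ℝ := fun x => (1/720) * x ^ 6 + (-7/3600) * x ^ 5 + (1/1440) * x ^ 4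
      + 0 * x ^ 3 + 0 * x ^ 2 + 0 * x + 0 with hg1
    set g2 : ℝ → ℝ := fun x => (1/720) * x ^ 6 + (-23/3600) * x ^ 5 + (17/1440) * x ^ 4
      + (-1/90) * x ^ 3 + (1/180) * x ^ 2 + (-1/720) * x + (1/7200) with hg2
    have e1 : ∀ x : ℝ, x ^ 4 * (x ^ 2 - 7 * x / 5 + 1/2) / 720 = g1 x := by
      intro x; rw [hg1]; ring
    have e2 : ∀ x : ℝ, (x - 1) ^ 4 * (x ^ 2 - 3 * x / 5 + 1/10) / 720 = g2 x := by
      intro x; rw [hg2]; ring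
    have hfg1 : Set.EqOn f g1 (Set.uIcc (0:ℝ) (1/2)) := by
      intro x hx
      rw [Set.uIcc_of_le (by norm_num : (0:ℝ) ≤ 1/2)] at hx
      by_cases h : x < 1/2
      · simp only [hf, if_pos h]; exact e1 x
      · have hx2 : x = 1/2 := le_antisymm hx.2 (not_lt.mp h)
        simp only [hf, if_neg h, hx2, hg1]; norm_num
    have hfg2 : Set.EqOn f g2 (Set.uIcc (1/2:ℝ) 1) := by
      intro x hx
      rw [Set.uIcc_of_le (by norm_num : (1/2:ℝ) ≤ 1)] at hx
      have h : ¬ x < 1/2 := not_lt.mpr hx.1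
      simp only [hf, if_neg h]; exact e2 x
    have hi1 : IntervalIntegrable f volume 0 (1/2) :=
      (((poly_cont _ _ _ _ _ _ _).continuousOn).congr hfg1).intervalIntegrable
    have hi2 : IntervalIntegrable f volume (1/2) 1 :=
      (((poly_cont _ _ _ _ _ _ _).continuousOn).congr hfg2).intervalIntegrable
    rw [← intervalIntegral.integral_add_adjacent_intervals hi1 hi2,
      intervalIntegral.integral_congr hfg1, intervalIntegral.integral_congr hfg2,
      hg1, hg2, poly_int, poly_int]
    norm_num
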